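/- arXiv:1312.1706 — 2 statements merged into one kernel-verified Lean document; each statement's English description precedes it below -/
import Mathlib

section
/- Let X be an n×p real matrix and A1, A2 ⊆ {1,...,p} disjoint index sets such that X_{A1∪A2} has full column rank. Then the minimum eigenvalue of (X_{A1∪A2}ᵀ X_{A1∪A2})⁻¹ is at most the minimum eigenvalue of (X_{A1}ᵀ Π⊥[A2] X_{A1})⁻¹, and the maximum eigenvalue of (X_{A1}ᵀ Π⊥[A2] X_{A1})⁻¹ is at most the maximum eigenvalue of (X_{A1∪A2}ᵀ X_{A1∪A2})⁻¹. -/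
open Matrix

/-- Submatrix of columns of `X` indexed by the finite set `S`. -/
noncomputable def cols {n p : ℕ} (X : Matrix (Fin n) (Fin p) ℝ) (S : Finset (Fin p)) :
    Matrix (Fin n) {x // x ∈ S} ℝ :=
  Matrix.of fun i j => X i j.1

/-- Orthogonal projection onto the column span of `X_S`. -/
noncomputable def proj {n p : ℕ} (X : Matrix (Fin n) (Fin p) ℝ) (S : Finset (Fin p)) :
    Matrix (Fin n) (Fin n) ℝ :=
  cols X S * ((cols X S)ᵀ * cols X S)⁻¹ * (cols X S)ᵀ


lemma rayleigh_aux {m : Type*} [Fintype m] [DecidableEq m]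
    {A : Matrix m m ℝ} (hA : A.IsHermitian) (x : m → ℝ) :
    ∃ y : m → ℝ, x ⬝ᵥ (A *ᵥ x) = ∑ i, hA.eigenvalues i * (y i * y i) ∧
      x ⬝ᵥ x = ∑ i, y i * y i := by
  set U : Matrix m m ℝ := (hA.eigenvectorUnitary : Matrix m m ℝ) with hU
  have hstar : (star U : Matrix m m ℝ) = Uᵀ := by
    simp [Matrix.star_eq_conjTranspose, Matrix.conjTranspose_eq_transpose_of_trivial]
  have hU1 : U * Uᵀ = 1 := by
    rw [← hstar]; exact (Matrix.mem_unitaryGroup_iff).mp hA.eigenvectorUnitary.2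
  refine ⟨Uᵀ *ᵥ x, ?_, ?_⟩
  · conv_lhs => rw [hA.spectral_theorem, Unitary.conjStarAlgAut_apply]
    rw [hstar, ← Matrix.mulVec_mulVec, ← Matrix.mulVec_mulVec,
      dotProduct_mulVec x U, ← Matrix.mulVec_transpose]
    simp only [dotProduct, Matrix.mulVec_diagonal]
    exact Finset.sum_congr rfl fun i _ => by simp; ring
  · have : x ⬝ᵥ x = x ⬝ᵥ ((U * Uᵀ) *ᵥ x) := by rw [hU1, Matrix.one_mulVec]
    rw [this, ← Matrix.mulVec_mulVec, dotProduct_mulVec x U, ← Matrix.mulVec_transpose]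
    rfl

lemma rayleigh_le {m : Type*} [Fintype m] [DecidableEq m] [Nonempty m]
    {A : Matrix m m ℝ} (hA : A.IsHermitian) (x : m → ℝ) :
    (⨅ i, hA.eigenvalues i) * (x ⬝ᵥ x) ≤ x ⬝ᵥ (A *ᵥ x) ∧
      x ⬝ᵥ (A *ᵥ x) ≤ (⨆ i, hA.eigenvalues i) * (x ⬝ᵥ x) := by
  obtain ⟨y, h1, h2⟩ := rayleigh_aux hA x
  rw [h1, h2, Finset.mul_sum, Finset.mul_sum]
  constructor
  · refine Finset.sum_le_sum fun i _ => ?_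
    exact mul_le_mul_of_nonneg_right (ciInf_le (Set.Finite.bddBelow (Set.finite_range _)) i)
      (mul_self_nonneg _)
  · refine Finset.sum_le_sum fun i _ => ?_
    exact mul_le_mul_of_nonneg_right (le_ciSup (Set.Finite.bddAbove (Set.finite_range _)) i)
      (mul_self_nonneg _)

lemma exists_unit_eigvec {m : Type*} [Fintype m] [DecidableEq m]
    {A : Matrix m m ℝ} (hA : A.IsHermitian) (i : m) :
    ∃ v : m → ℝ, v ⬝ᵥ v = 1 ∧ v ⬝ᵥ (A *ᵥ v) = hA.eigenvalues i := by
  refine ⟨⇑(hA.eigenvectorBasis i), ?_, ?_⟩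
  · have hn : ‖hA.eigenvectorBasis i‖ = 1 := hA.eigenvectorBasis.orthonormal.1 i
    have := real_inner_self_eq_norm_mul_norm (hA.eigenvectorBasis i)
    rw [hn, mul_one] at this
    rw [← this]
    simp only [dotProduct, PiLp.inner_apply, RCLike.inner_apply, conj_trivial]
  · rw [hA.mulVec_eigenvectorBasis]
    have hn : ‖hA.eigenvectorBasis i‖ = 1 := hA.eigenvectorBasis.orthonormal.1 i
    have h := real_inner_self_eq_norm_mul_norm (hA.eigenvectorBasis i)
    rw [hn, mul_one] at h
    have hvv : ⇑(hA.eigenvectorBasis i) ⬝ᵥ ⇑(hA.eigenvectorBasis i) = 1 := by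
      rw [← h]; simp only [dotProduct, PiLp.inner_apply, RCLike.inner_apply, conj_trivial]
    rw [dotProduct_smul, hvv]
    simp


lemma posDef_transpose_mul_self {n : ℕ} {m : Type*} [Fintype m] [DecidableEq m]
    (Y : Matrix (Fin n) m ℝ) (h : LinearIndependent ℝ (fun j : m => fun i => Y i j)) :
    (Yᵀ * Y).PosDef := by
  have hinj : Function.Injective Y.mulVec := by
    rw [Matrix.mulVec_injective_iff]
    exact h
  refine Matrix.posDef_iff_dotProduct_mulVec.mpr ⟨?_, fun x hx => ?_⟩
  · have := Matrix.isHermitian_conjTranspose_mul_self Y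
    rwa [Matrix.conjTranspose_eq_transpose_of_trivial] at this
  · have hyx : Y *ᵥ x ≠ 0 := by
      intro hz
      exact hx (hinj (by simpa using hz))
    have : star x ⬝ᵥ (Yᵀ * Y) *ᵥ x = (Y *ᵥ x) ⬝ᵥ (Y *ᵥ x) := by
      rw [← Matrix.mulVec_mulVec, Matrix.dotProduct_mulVec, Matrix.vecMul_transpose]
      simp
    rw [this]
    rcases Function.ne_iff.mp hyx with ⟨i, hi⟩
    refine Finset.sum_pos' (fun j _ => mul_self_nonneg _) ⟨i, Finset.mem_univ i, ?_⟩
    have h0 : (Y *ᵥ x) i ≠ 0 := hi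
    exact mul_self_pos.mpr h0

def unionEquiv {α : Type*} [DecidableEq α] (A1 A2 : Finset α) (hdisj : Disjoint A1 A2) :
    {x // x ∈ A1} ⊕ {x // x ∈ A2} ≃ {x // x ∈ A1 ∪ A2} where
  toFun := Sum.elim (fun j => ⟨j.1, Finset.mem_union_left _ j.2⟩)
      (fun j => ⟨j.1, Finset.mem_union_right _ j.2⟩)
  invFun k := if h : k.1 ∈ A1 then Sum.inl ⟨k.1, h⟩ else
      Sum.inr ⟨k.1, (Finset.mem_union.mp k.2).resolve_left h⟩
  left_inv := by
    rintro (j | j)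
    · simp
    · have : j.1 ∉ A1 := fun h => (Finset.disjoint_left.mp hdisj h) j.2
      simp [this]
  right_inv k := by
    by_cases h : k.1 ∈ A1 <;> simp [h]

lemma key {n p : ℕ} (X : Matrix (Fin n) (Fin p) ℝ) (A1 A2 : Finset (Fin p))
    (hdisj : Disjoint A1 A2)
    (hli : LinearIndependent ℝ (fun j : {x // x ∈ A1 ∪ A2} => fun i => X i j.1)) :
    ((cols X A1)ᵀ * (1 - proj X A2) * cols X A1)⁻¹ =
      (((cols X (A1 ∪ A2))ᵀ * cols X (A1 ∪ A2))⁻¹).submatrix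
        (fun j => ⟨j.1, Finset.mem_union_left _ j.2⟩)
        (fun j => ⟨j.1, Finset.mem_union_left _ j.2⟩) := by
  classical
  set Y := cols X (A1 ∪ A2) with hY
  set X1 := cols X A1 with hX1
  set X2 := cols X A2 with hX2
  set φ := unionEquiv A1 A2 hdisj with hφ
  -- positive definiteness / invertibility
  have hMpd : (Yᵀ * Y).PosDef := posDef_transpose_mul_self Y hli
  have hli2 : LinearIndependent ℝ (fun j : {x // x ∈ A2} => fun i => X2 i j) := by
    have := hli.comp (fun j : {x // x ∈ A2} =>
        (⟨j.1, Finset.mem_union_right _ j.2⟩ : {x // x ∈ A1 ∪ A2}))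
      (fun a b hab => Subtype.ext (by simpa using congrArg Subtype.val hab))
    exact this
  have hDpd : (X2ᵀ * X2).PosDef := posDef_transpose_mul_self X2 hli2
  letI iM : Invertible (Yᵀ * Y) := hMpd.isUnit.invertible
  letI iD : Invertible (X2ᵀ * X2) := hDpd.isUnit.invertible
  -- block decomposition
  have hsub : (Yᵀ * Y).submatrix φ φ =
      fromBlocks (X1ᵀ * X1) (X1ᵀ * X2) (X2ᵀ * X1) (X2ᵀ * X2) := by
    ext s t
    cases s <;> cases t <;>
      simp [Matrix.mul_apply, hY, hX1, hX2, cols, unionEquiv, Matrix.fromBlocks, hφ]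
  letI iF : Invertible (fromBlocks (X1ᵀ * X1) (X1ᵀ * X2) (X2ᵀ * X1) (X2ᵀ * X2)) :=
    ((Matrix.submatrixEquivInvertible (Yᵀ * Y) φ φ)).copy _ hsub.symm
  letI iS : Invertible (X1ᵀ * X1 - (X1ᵀ * X2) * ⅟(X2ᵀ * X2) * (X2ᵀ * X1)) :=
    Matrix.invertibleOfFromBlocks₂₂Invertible _ _ _ _
  have hschur := Matrix.invOf_fromBlocks₂₂_eq (X1ᵀ * X1) (X1ᵀ * X2) (X2ᵀ * X1) (X2ᵀ * X2)
  -- identify N with the Schur complement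
  have hN : X1ᵀ * (1 - proj X A2) * X1
      = X1ᵀ * X1 - (X1ᵀ * X2) * ⅟(X2ᵀ * X2) * (X2ᵀ * X1) := by
    rw [invOf_eq_nonsing_inv]
    simp only [proj, ← hX2, Matrix.mul_sub, Matrix.sub_mul, Matrix.mul_one, Matrix.mul_assoc]
  ext j k
  have hinv : ((Yᵀ * Y).submatrix φ φ)⁻¹ = ((Yᵀ * Y)⁻¹).submatrix φ φ :=
    Matrix.inv_submatrix_equiv (Yᵀ * Y) φ φ
  have : (fromBlocks (X1ᵀ * X1) (X1ᵀ * X2) (X2ᵀ * X1) (X2ᵀ * X2))⁻¹ (Sum.inl j) (Sum.inl k)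
      = ((Yᵀ * Y)⁻¹).submatrix φ φ (Sum.inl j) (Sum.inl k) := by
    rw [← hinv, hsub]
  have hblock : (X1ᵀ * X1 - X1ᵀ * X2 * ⅟(X2ᵀ * X2) * (X2ᵀ * X1))⁻¹ j k
      = (fromBlocks (X1ᵀ * X1) (X1ᵀ * X2) (X2ᵀ * X1) (X2ᵀ * X2))⁻¹ (Sum.inl j) (Sum.inl k) := by
    simp only [← invOf_eq_nonsing_inv, hschur, Matrix.fromBlocks_apply₁₁]
  rw [hN, hblock, this]
  rfl


/-- Interlacing-type bounds: `λ_min((X_{A1∪A2}ᵀX_{A1∪A2})⁻¹) ≤ λ_min((X_{A1}ᵀΠ⊥[A2]X_{A1})⁻¹)`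
and `λ_max((X_{A1}ᵀΠ⊥[A2]X_{A1})⁻¹) ≤ λ_max((X_{A1∪A2}ᵀX_{A1∪A2})⁻¹)`. -/
theorem stmt2 {n p : ℕ} (X : Matrix (Fin n) (Fin p) ℝ) (A1 A2 : Finset (Fin p))
    (hdisj : Disjoint A1 A2) (hA1 : A1.Nonempty)
    (hli : LinearIndependent ℝ (fun j : {x // x ∈ A1 ∪ A2} => fun i => X i j.1))
    (h1 : (((cols X (A1 ∪ A2))ᵀ * cols X (A1 ∪ A2))⁻¹).IsHermitian)
    (h2 : (((cols X A1)ᵀ * (1 - proj X A2) * cols X A1)⁻¹).IsHermitian) :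
    (⨅ i, h1.eigenvalues i) ≤ (⨅ i, h2.eigenvalues i) ∧
      (⨆ i, h2.eigenvalues i) ≤ (⨆ i, h1.eigenvalues i) := by
  classical
  haveI hne1 : Nonempty {x // x ∈ A1} := ⟨⟨hA1.choose, hA1.choose_spec⟩⟩
  haveI hne12 : Nonempty {x // x ∈ A1 ∪ A2} :=
    ⟨⟨hA1.choose, Finset.mem_union_left _ hA1.choose_spec⟩⟩
  set Minv := ((cols X (A1 ∪ A2))ᵀ * cols X (A1 ∪ A2))⁻¹ with hMinv
  set Ninv := ((cols X A1)ᵀ * (1 - proj X A2) * cols X A1)⁻¹ with hNinv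
  set φ := unionEquiv A1 A2 hdisj with hφ
  -- for every index i of m1, the eigenvalue of Ninv is a Rayleigh value of Minv
  have main : ∀ i : {x // x ∈ A1}, ∃ w : {x // x ∈ A1 ∪ A2} → ℝ,
      w ⬝ᵥ w = 1 ∧ w ⬝ᵥ (Minv *ᵥ w) = h2.eigenvalues i := by
    intro i
    obtain ⟨v, hv1, hv2⟩ := exists_unit_eigvec h2 i
    set u : {x // x ∈ A1} ⊕ {x // x ∈ A2} → ℝ := Sum.elim v 0 with hu
    refine ⟨fun k => u (φ.symm k), ?_, ?_⟩
    · have := Fintype.sum_equiv φ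
        (fun s => u (φ.symm (φ s)) * u (φ.symm (φ s)))
        (fun k => u (φ.symm k) * u (φ.symm k)) (fun s => rfl)
      rw [dotProduct, ← this]
      simp only [Equiv.symm_apply_apply]
      have : ∑ s, u s * u s = Sum.elim v 0 ⬝ᵥ Sum.elim v 0 := rfl
      rw [this, sumElim_dotProduct_sumElim, hv1]
      simp
    · set w : {x // x ∈ A1 ∪ A2} → ℝ := fun k => u (φ.symm k) with hw
      have hmv : (Minv.submatrix φ φ) *ᵥ u = (Minv *ᵥ w) ∘ φ := by
        rw [Matrix.submatrix_mulVec_equiv]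
        rfl
      have hsum := Fintype.sum_equiv φ
        (fun s => w (φ s) * ((Minv *ᵥ w) ∘ φ) s)
        (fun k => w k * (Minv *ᵥ w) k) (fun s => rfl)
      have hwφ : ∀ s, w (φ s) = u s := fun s => by
        simp only [hw, Equiv.symm_apply_apply]
      rw [dotProduct, ← hsum]
      have : ∑ s, w (φ s) * ((Minv *ᵥ w) ∘ φ) s
          = u ⬝ᵥ ((Minv.submatrix φ φ) *ᵥ u) := by
        rw [hmv, dotProduct]
        exact Finset.sum_congr rfl fun s _ => by rw [hwφ]
      rw [this, hu, ← Matrix.fromBlocks_toBlocks (Minv.submatrix φ φ),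
        Matrix.fromBlocks_mulVec, sumElim_dotProduct_sumElim]
      have htb : (Minv.submatrix φ φ).toBlocks₁₁ = Ninv := by
        ext j k
        rw [hNinv, key X A1 A2 hdisj hli]
        rfl
      rw [htb]
      simp [hv2]
  -- attained extrema of h2's eigenvalues
  obtain ⟨imin, hmin⟩ := Finite.exists_min h2.eigenvalues
  obtain ⟨imax, hmax⟩ := Finite.exists_max h2.eigenvalues
  have hinf2 : (⨅ i, h2.eigenvalues i) = h2.eigenvalues imin :=
    le_antisymm (ciInf_le (Set.Finite.bddBelow (Set.finite_range _)) imin) (le_ciInf hmin)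
  have hsup2 : (⨆ i, h2.eigenvalues i) = h2.eigenvalues imax :=
    le_antisymm (ciSup_le hmax) (le_ciSup (Set.Finite.bddAbove (Set.finite_range _)) imax)
  constructor
  · obtain ⟨w, hw1, hw2⟩ := main imin
    have := (rayleigh_le h1 w).1
    rw [hw1, mul_one, hw2] at this
    rw [hinf2]
    exact this
  · obtain ⟨w, hw1, hw2⟩ := main imax
    have := (rayleigh_le h1 w).2
    rw [hw1, mul_one, hw2] at this
    rw [hsup2]
    exact this
end

section
/- Let S*, S ⊆ {1,...,p} with |S| = |S*| = k and ℓ = |S*∖S| ≥ 1, and let X be n×p with ρ_{2k} > 0, where ρ_{2k} is the infimum of ‖Xθ‖₂²/(n‖θ‖₂²) over θ with ‖θ‖₀ ≤ 2k and S* ⊆ supp(θ). Then for ξ = Xβ* with supp(β*) = S* and β_min = min_{i∈S*}|β*_i|, the projected signal energy satisfies ‖Π⊥[S] ξ‖₂² ≥ ℓ n ρ_{2k} β_min². -/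
open Matrix
open scoped Classical

/-- Squared Euclidean norm of a vector. -/
noncomputable def sqnorm {m : Type*} [Fintype m] (v : m → ℝ) : ℝ := ∑ i, v i ^ 2

/-- Projected signal energy lower bound: for `ξ = Xβ*`, `ℓ = |S*∖S| ≥ 1`, and restricted
eigenvalue `ρ_{2k}`, it holds that `‖Π⊥[S]ξ‖₂² ≥ ℓ n ρ_{2k} β_min²`. -/
theorem stmt12 {n p : ℕ} (X : Matrix (Fin n) (Fin p) ℝ) (k : ℕ)
    (Sstar S : Finset (Fin p)) (hScard : S.card = k) (hSstarcard : Sstar.card = k)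
    (β : Fin p → ℝ) (hsupp : ∀ i, β i ≠ 0 ↔ i ∈ Sstar) (hSne : Sstar.Nonempty)
    (hli : LinearIndependent ℝ (fun j : {x // x ∈ S} => fun i => X i j.1))
    (ρ : ℝ) (hρpos : 0 < ρ)
    (hρ : ∀ θ : Fin p → ℝ,
      (Finset.univ.filter (fun i => θ i ≠ 0)).card ≤ 2 * k →
      (∀ i ∈ Sstar, θ i ≠ 0) →
      ρ * ((n : ℝ) * ∑ i, θ i ^ 2) ≤ ∑ i, (X *ᵥ θ) i ^ 2)
    (ℓ : ℕ) (hℓ : ℓ = (Sstar \ S).card) (hℓ1 : 1 ≤ ℓ) :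
    (ℓ : ℝ) * n * ρ * (Sstar.inf' hSne fun i => |β i|) ^ 2 ≤
      sqnorm ((1 - proj X S) *ᵥ (X *ᵥ β)) := by
  classical
  set ξ := X *ᵥ β with hξ
  set A := cols X S with hA
  set c : {x // x ∈ S} → ℝ := ((Aᵀ * A)⁻¹ * Aᵀ) *ᵥ ξ with hcdef
  set γ : Fin p → ℝ := fun j => if h : j ∈ S then c ⟨j, h⟩ else 0 with hγdef
  set θ : Fin p → ℝ := fun j => β j - γ j with hθdef
  have hγ0 : ∀ j, j ∉ S → γ j = 0 := fun j hj => dif_neg hj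
  have hβ0 : ∀ i, i ∉ Sstar → β i = 0 := by
    intro i h
    by_contra hb
    exact h ((hsupp i).1 hb)
  -- Step 1 : (1 - proj) ξ = X θ
  have hXγ : X *ᵥ γ = A *ᵥ c := by
    funext i
    show ∑ j, X i j * γ j = ∑ j : {x // x ∈ S}, A i j * c j
    rw [← Finset.sum_subset (Finset.subset_univ S)
        (fun x _ hx => by rw [hγ0 x hx, mul_zero]),
      ← Finset.sum_attach S (fun j => X i j * γ j), Finset.univ_eq_attach]
    refine Finset.sum_congr rfl fun j _ => ?_
    have : γ j.1 = c j := by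
      rw [hγdef]
      simp [j.2]
    rw [this]
    rfl
  have hproj_eq : proj X S = A * ((Aᵀ * A)⁻¹ * Aᵀ) := by
    rw [proj, hA, Matrix.mul_assoc]
  have hprojξ : proj X S *ᵥ ξ = A *ᵥ c := by
    rw [hproj_eq, ← Matrix.mulVec_mulVec]
  have hθfun : (fun j => β j - γ j) = β - γ := rfl
  have hproj : (1 - proj X S) *ᵥ ξ = X *ᵥ θ := by
    rw [Matrix.sub_mulVec, Matrix.one_mulVec, hprojξ, ← hXγ, hθdef, hθfun,
      Matrix.mulVec_sub, hξ]
  -- support of θ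
  have hθsupp : ∀ i, θ i ≠ 0 → i ∈ S ∪ Sstar := by
    intro i hi
    by_contra h
    rw [Finset.mem_union, not_or] at h
    have : θ i = 0 := by rw [hθdef]; simp [hβ0 i h.2, hγ0 i h.1]
    exact hi this
  -- Step 2 : restricted eigenvalue bound for θ via perturbation limit
  set δ : Fin p → ℝ := fun i => if i ∈ Sstar then (1 : ℝ) else 0 with hδdef
  set ε₀ : ℝ := Sstar.inf' hSne fun i => if θ i = 0 then 1 else |θ i| with hε₀def
  have hε₀pos : 0 < ε₀ := by
    rw [hε₀def, Finset.lt_inf'_iff]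
    intro b _
    split
    · exact one_pos
    · next h => exact abs_pos.2 h
  have hmain : ∀ ε ∈ Set.Ioo (0 : ℝ) ε₀,
      ρ * ((n : ℝ) * ∑ i, (θ i + ε * δ i) ^ 2) ≤
        ∑ i, (X *ᵥ (fun i => θ i + ε * δ i)) i ^ 2 := by
    intro ε hε
    apply hρ
    · have hsub : (Finset.univ.filter (fun i => θ i + ε * δ i ≠ 0)) ⊆ S ∪ Sstar := by
        intro i hi
        rw [Finset.mem_filter] at hi
        by_contra h
        rw [Finset.mem_union, not_or] at h
        have hθi : θ i = 0 := by
          by_contra hc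
          rcases Finset.mem_union.1 (hθsupp i hc) with h' | h'
          exacts [h.1 h', h.2 h']
        have hδi : δ i = 0 := if_neg h.2
        exact hi.2 (by rw [hθi, hδi, mul_zero, add_zero])
      calc (Finset.univ.filter (fun i => θ i + ε * δ i ≠ 0)).card
          ≤ (S ∪ Sstar).card := Finset.card_le_card hsub
        _ ≤ S.card + Sstar.card := Finset.card_union_le _ _
        _ = 2 * k := by rw [hScard, hSstarcard]; ring
    · intro i hi
      have hδi : δ i = 1 := if_pos hi
      rw [hδi, mul_one]
      rcases eq_or_ne (θ i) 0 with h | h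
      · rw [h, zero_add]
        exact ne_of_gt hε.1
      · intro hcon
        have h1 : ε₀ ≤ |θ i| := by
          have := Finset.inf'_le (fun i => if θ i = 0 then 1 else |θ i|) hi
          rwa [if_neg h, ← hε₀def] at this
        have h3 : |θ i| = ε := by
          rw [show θ i = -ε by linarith, abs_neg, abs_of_pos hε.1]
        linarith [hε.2]
  -- pass to the limit ε → 0⁺
  set F : ℝ → ℝ := fun ε =>
    (∑ i, (∑ j, X i j * (θ j + ε * δ j)) ^ 2) -
      ρ * ((n : ℝ) * ∑ i, (θ i + ε * δ i) ^ 2) with hFdef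
  have hFeq : ∀ ε, F ε =
      (∑ i, (X *ᵥ (fun i => θ i + ε * δ i)) i ^ 2) -
        ρ * ((n : ℝ) * ∑ i, (θ i + ε * δ i) ^ 2) := by
    intro ε
    rw [hFdef]
    simp [Matrix.mulVec, dotProduct]
  have hFcont : Continuous F := by
    rw [hFdef]
    apply Continuous.sub
    · apply continuous_finset_sum
      intro i _
      apply Continuous.pow
      apply continuous_finset_sum
      intro j _
      fun_prop
    · apply Continuous.mul continuous_const
      apply Continuous.mul continuous_const
      apply continuous_finset_sum
      intro i _
      fun_prop
  have hF0 : 0 ≤ F 0 := by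
    have ht : Filter.Tendsto F (nhdsWithin 0 (Set.Ioi 0)) (nhds (F 0)) :=
      (hFcont.tendsto 0).mono_left nhdsWithin_le_nhds
    refine ge_of_tendsto ht ?_
    filter_upwards [Ioo_mem_nhdsGT_of_mem (Set.left_mem_Ico.2 hε₀pos)] with ε hε
    have := hmain ε hε
    rw [hFeq ε]
    linarith
  have key : ρ * ((n : ℝ) * ∑ i, θ i ^ 2) ≤ ∑ i, (X *ᵥ θ) i ^ 2 := by
    have h0 := hF0
    rw [hFeq 0] at h0
    simp only [zero_mul, add_zero] at h0
    linarith
  -- Step 3: lower bound on ‖θ‖²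
  set m : ℝ := Sstar.inf' hSne fun i => |β i| with hmdef
  have hm0 : 0 ≤ m := Finset.le_inf' hSne _ (fun i _ => abs_nonneg _)
  have hcard : (ℓ : ℝ) * m ^ 2 ≤ ∑ i, θ i ^ 2 := by
    have h1 : (ℓ : ℝ) * m ^ 2 = ∑ _i ∈ Sstar \ S, m ^ 2 := by
      rw [Finset.sum_const, ← hℓ, nsmul_eq_mul]
    rw [h1]
    calc ∑ _i ∈ Sstar \ S, m ^ 2 ≤ ∑ i ∈ Sstar \ S, θ i ^ 2 := by
          apply Finset.sum_le_sum
          intro i hi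
          rw [Finset.mem_sdiff] at hi
          have hθβ : θ i = β i := by
            rw [hθdef]
            simp [hγ0 i hi.2]
          have hle : m ≤ |β i| := Finset.inf'_le _ hi.1
          calc m ^ 2 ≤ |β i| ^ 2 := pow_le_pow_left₀ hm0 hle 2
            _ = β i ^ 2 := sq_abs _
            _ = θ i ^ 2 := by rw [hθβ]
      _ ≤ ∑ i, θ i ^ 2 :=
          Finset.sum_le_sum_of_subset_of_nonneg (Finset.subset_univ _)
            (fun i _ _ => sq_nonneg _)
  -- conclusion
  calc (ℓ : ℝ) * n * ρ * m ^ 2 = ρ * ((n : ℝ) * ((ℓ : ℝ) * m ^ 2)) := by ring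
    _ ≤ ρ * ((n : ℝ) * ∑ i, θ i ^ 2) := by
        apply mul_le_mul_of_nonneg_left _ hρpos.le
        exact mul_le_mul_of_nonneg_left hcard (Nat.cast_nonneg n)
    _ ≤ ∑ i, (X *ᵥ θ) i ^ 2 := key
    _ = sqnorm ((1 - proj X S) *ᵥ ξ) := by rw [hproj]; rfl
end
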